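/- If a nonempty convex set C ⊆ ℝ^h is hyperbolic, i.e., C ⊆ μ𝔹 + 0⁺C for some μ ≥ 0 (where 𝔹 is the closed unit ball), then the polar set of C contains μ⁻¹𝔹 ∩ C^b, where C^b is the barrier cone of C. -/
import Mathlib


open RealInnerProductSpace Pointwise

/-- The recession cone `0⁺C` of a set `C`. -/
def recCone {h : ℕ} (C : Set (EuclideanSpace ℝ (Fin h))) : Set (EuclideanSpace ℝ (Fin h)) :=
  {y | ∀ x ∈ C, ∀ μ : ℝ, 0 ≤ μ → x + μ • y ∈ C}

/-- The barrier cone `C^b = {q | sup_{x ∈ C} ⟨q,x⟩ < +∞}`. -/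
def barrierCone {h : ℕ} (C : Set (EuclideanSpace ℝ (Fin h))) : Set (EuclideanSpace ℝ (Fin h)) :=
  {q | BddAbove ((fun x => ⟪q, x⟫) '' C)}

/-- The polar set `C° = {q | ⟨q,x⟩ ≤ 1 for all x ∈ C}`. -/
def polarSet {h : ℕ} (C : Set (EuclideanSpace ℝ (Fin h))) : Set (EuclideanSpace ℝ (Fin h)) :=
  {q | ∀ x ∈ C, ⟪q, x⟫ ≤ 1}

/-- If a nonempty convex `C` is hyperbolic, i.e. `C ⊆ μ𝔹 + 0⁺C` with `μ ≥ 0`, then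
`C° ⊇ μ⁻¹𝔹 ∩ C^b`. -/
theorem stmt2 {h : ℕ} (C : Set (EuclideanSpace ℝ (Fin h)))
    (hne : C.Nonempty) (hconv : Convex ℝ C) (μ : ℝ) (hμ : 0 ≤ μ)
    (hhyp : C ⊆ Metric.closedBall (0 : EuclideanSpace ℝ (Fin h)) μ + recCone C) :
    Metric.closedBall (0 : EuclideanSpace ℝ (Fin h)) μ⁻¹ ∩ barrierCone C ⊆ polarSet C := by
  rintro q ⟨hqball, hqb⟩ x hx
  -- inner q y ≤ 0 for y in recession cone
  have hrec : ∀ y ∈ recCone C, ⟪q, y⟫ ≤ 0 := by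
    intro y hy
    obtain ⟨x0, hx0⟩ := hne
    obtain ⟨M, hM⟩ := hqb
    by_contra hpos
    push_neg at hpos
    set t : ℝ := (|M| + |⟪q, x0⟫| + 1) / ⟪q, y⟫ with ht
    have htpos : 0 ≤ t := by
      apply div_nonneg _ hpos.le
      positivity
    have hmem := hy x0 hx0 t htpos
    have hle : ⟪q, x0 + t • y⟫ ≤ M := hM ⟨_, hmem, rfl⟩
    rw [inner_add_right, real_inner_smul_right] at hle
    have : t * ⟪q, y⟫ = |M| + |⟪q, x0⟫| + 1 := by
      rw [ht, div_mul_cancel₀ _ hpos.ne']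
    rw [this] at hle
    have h1 : M ≤ |M| := le_abs_self M
    have h2 : -|⟪q, x0⟫| ≤ ⟪q, x0⟫ := neg_abs_le _
    linarith
  obtain ⟨b, hb, y, hy, rfl⟩ := hhyp hx
  rw [inner_add_right]
  have h1 : ⟪q, b⟫ ≤ ‖q‖ * ‖b‖ := real_inner_le_norm q b
  have hq : ‖q‖ ≤ μ⁻¹ := by simpa using hqball
  have hbn : ‖b‖ ≤ μ := by simpa using hb
  have h2 : ⟪q, y⟫ ≤ 0 := hrec y hy
  have h3 : ‖q‖ * ‖b‖ ≤ μ⁻¹ * μ := by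
    apply mul_le_mul hq hbn (norm_nonneg _)
    positivity
  have h4 : μ⁻¹ * μ ≤ 1 := by
    rcases eq_or_lt_of_le hμ with h | h
    · simp [← h]
    · rw [inv_mul_cancel₀ h.ne']
  linarith
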